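/- Let b : ℕ → ℂ with b 0 ≠ 0, m ≥ 1, and a a sequence satisfying a n = ∑_{j=0}^{n+m} b (n+m-j) a j for all n ≥ 0. Then, as an identity of formal power series in ℂ[[s]], (∑_{k=0}^{m-1} a k · ∑_{n=k}^{m-1} b (n-k) s^n) = A(s) · (B(s) - s^m), where A(s) = ∑_{n≥0} a n s^n and B(s) = ∑_{n≥0} b n s^n. -/

import Mathlib

open PowerSeries

theorem stmt_1 (b : ℕ → ℂ) (hb : b 0 ≠ 0) (m : ℕ) (hm : 1 ≤ m)
    (a : ℕ → ℂ)
    (ha : ∀ n : ℕ, a n = ∑ j ∈ Finset.range (n + m + 1), b (n + m - j) * a j) :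
    (∑ k ∈ Finset.range m, PowerSeries.C (a k) *
        ∑ n ∈ Finset.Ico k m, PowerSeries.C (b (n - k)) * (PowerSeries.X : ℂ⟦X⟧) ^ n)
      = PowerSeries.mk a * (PowerSeries.mk b - (PowerSeries.X : ℂ⟦X⟧) ^ m) := by
  ext n
  rw [mul_sub, map_sub, PowerSeries.coeff_mul, Finset.Nat.sum_antidiagonal_eq_sum_range_succ_mk,
    PowerSeries.coeff_mul_X_pow']
  simp only [coeff_mk, map_sum, coeff_C_mul, coeff_X_pow, mul_ite, mul_one, mul_zero,
    Finset.mul_sum, Finset.sum_ite_eq, Finset.mem_Ico]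
  by_cases hn : n < m
  · rw [if_neg (by omega), sub_zero]
    rw [← Finset.sum_subset (Finset.range_subset_range.2 (by omega : n + 1 ≤ m))
      (fun x hx hx' => by rw [if_neg (by simp at hx hx' ⊢; omega)])]
    exact Finset.sum_congr rfl fun x hx => by
      rw [if_pos ⟨by simp at hx; omega, hn⟩]
  · rw [if_pos (by omega)]
    have h := ha (n - m)
    rw [show n - m + m = n from by omega] at h
    rw [h, Finset.sum_congr rfl (fun x _ => mul_comm (b (n - x)) (a x)), sub_self,
      Finset.sum_eq_zero fun x _ => if_neg (by omega)]
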